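/- Fix u > 0, a > 0 and b > 0, and for λ ∈ (0,1) and δ > −1 set s_λ(δ) := D(δ)/√K(δ), where D(δ) := 1 − λ + λ a (1+δ) and K(δ) := u(1 − λ + λ b²(1+δ)²) + (1 − λ + λ a²(1+δ)²) − D(δ)². Then λ^{-1} · (∂²/∂δ²) s_λ(δ) |_{δ=0} → −(a² + b² u)/u^{3/2} as λ → 0⁺. In particular, there exists λ₀ ∈ (0,1) such that for every λ ∈ (0,λ₀) the second derivative of δ ↦ s_λ(δ) at δ = 0 is strictly negative, i.e., the Sharpe ratio is locally concave in the allocation change δ at δ = 0. -/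

import Mathlib

noncomputable section SharpeAux

noncomputable section SharpeAux

/-- denominator inside the sqrt -/
def Kf (u a b lam δ : ℝ) : ℝ :=
  u * (1 - lam + lam * b^2 * (1+δ)^2) + (1 - lam + lam * a^2 * (1+δ)^2)
    - (1 - lam + lam * a * (1+δ))^2

/-- derivative of Kf in δ -/
def Kd (u a b lam δ : ℝ) : ℝ :=
  2*lam*((u*b^2+a^2)*(1+δ) - a*(1 - lam + lam * a * (1+δ)))

/-- numerator of first derivative -/
def Nf (u a b lam δ : ℝ) : ℝ :=
  2*lam*a*Kf u a b lam δ - (1 - lam + lam * a * (1+δ)) * Kd u a b lam δ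

lemma Kf_pos {u a b lam : ℝ} (hu : 0 < u) (hl : 0 < lam) (hl1 : lam < 1) (δ : ℝ) :
    0 < Kf u a b lam δ := by
  have h : Kf u a b lam δ
      = u * ((1-lam) + lam * (b*(1+δ))^2) + lam*(1-lam)*(a*(1+δ)-1)^2 := by
    unfold Kf; ring
  rw [h]
  have h1 : (0:ℝ) < 1 - lam := by linarith
  have h2 : (0:ℝ) < 1 - lam + lam * (b*(1+δ))^2 := by nlinarith [sq_nonneg (b*(1+δ))]
  nlinarith [mul_pos hu h2, mul_nonneg (mul_nonneg hl.le h1.le) (sq_nonneg (a*(1+δ)-1))]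

lemma hasDerivAt_Kf (u a b lam δ : ℝ) :
    HasDerivAt (Kf u a b lam) (Kd u a b lam δ) δ := by
  have h1 : HasDerivAt (fun x:ℝ => (1+x)) 1 δ := (hasDerivAt_id δ).const_add 1
  have h2 : HasDerivAt (fun x:ℝ => (1+x)^2) (2*(1+δ)) δ := by
    simpa using h1.fun_pow 2
  have hD : HasDerivAt (fun x:ℝ => 1 - lam + lam * a * (1+x)) (lam*a) δ := by
    simpa using (h1.const_mul (lam*a)).const_add (1-lam)
  have := ((((h2.const_mul (lam*b^2)).const_add (1-lam)).const_mul u).add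
      ((h2.const_mul (lam*a^2)).const_add (1-lam))).sub (hD.pow 2)
  refine this.congr_deriv ?_
  unfold Kd; ring

lemma hasDerivAt_D (a lam δ : ℝ) :
    HasDerivAt (fun x:ℝ => 1 - lam + lam * a * (1+x)) (lam*a) δ := by
  simpa using (((hasDerivAt_id δ).const_add 1).const_mul (lam*a)).const_add (1-lam)

lemma hasDerivAt_Kd (u a b lam δ : ℝ) :
    HasDerivAt (Kd u a b lam) (2*lam*(u*b^2+a^2) - 2*lam^2*a^2) δ := by
  have h1 : HasDerivAt (fun x:ℝ => (1+x)) 1 δ := (hasDerivAt_id δ).const_add 1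
  have := (((h1.const_mul (u*b^2+a^2)).sub ((hasDerivAt_D a lam δ).const_mul a)).const_mul (2*lam))
  refine this.congr_deriv ?_
  ring
lemma hasDerivAt_sqrtK {u a b lam : ℝ} (hu : 0 < u) (hl : 0 < lam) (hl1 : lam < 1) (δ : ℝ) :
    HasDerivAt (fun x => Real.sqrt (Kf u a b lam x))
      (Kd u a b lam δ / (2 * Real.sqrt (Kf u a b lam δ))) δ := by
  have hK := Kf_pos (a:=a) (b:=b) hu hl hl1 δ
  have h := (Real.hasDerivAt_sqrt hK.ne').comp δ (hasDerivAt_Kf u a b lam δ)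
  refine h.congr_deriv ?_
  ring

lemma hasDerivAt_sharpe {u a b lam : ℝ} (hu : 0 < u) (hl : 0 < lam) (hl1 : lam < 1) (δ : ℝ) :
    HasDerivAt (fun x => (1 - lam + lam * a * (1+x)) / Real.sqrt (Kf u a b lam x))
      (Nf u a b lam δ / (2 * Kf u a b lam δ * Real.sqrt (Kf u a b lam δ))) δ := by
  have hK := Kf_pos (a:=a) (b:=b) hu hl hl1 δ
  have hg : 0 < Real.sqrt (Kf u a b lam δ) := Real.sqrt_pos.mpr hK
  have hg2 : Real.sqrt (Kf u a b lam δ) ^ 2 = Kf u a b lam δ := Real.sq_sqrt hK.le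
  have h := (hasDerivAt_D a lam δ).div (hasDerivAt_sqrtK (a:=a) (b:=b) hu hl hl1 δ) hg.ne'
  refine h.congr_deriv ?_
  unfold Nf
  set g := Real.sqrt (Kf u a b lam δ) with hgdef
  rw [← hg2]
  field_simp

lemma hasDerivAt_sharpe' {u a b lam : ℝ} (hu : 0 < u) (hl : 0 < lam) (hl1 : lam < 1) (δ : ℝ) :
    HasDerivAt (fun x => Nf u a b lam x / (2 * Kf u a b lam x * Real.sqrt (Kf u a b lam x)))
      ((2 * (lam*a*Kd u a b lam δ - (1 - lam + lam * a * (1+δ)) * (2*lam*(u*b^2+a^2) - 2*lam^2*a^2))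
          * Kf u a b lam δ - 3 * Nf u a b lam δ * Kd u a b lam δ)
        / (4 * (Kf u a b lam δ)^2 * Real.sqrt (Kf u a b lam δ))) δ := by
  have hK := Kf_pos (a:=a) (b:=b) hu hl hl1 δ
  have hg : 0 < Real.sqrt (Kf u a b lam δ) := Real.sqrt_pos.mpr hK
  have hg2 : Real.sqrt (Kf u a b lam δ) ^ 2 = Kf u a b lam δ := Real.sq_sqrt hK.le
  have hN : HasDerivAt (Nf u a b lam)
      (lam*a*Kd u a b lam δ - (1 - lam + lam * a * (1+δ)) * (2*lam*(u*b^2+a^2) - 2*lam^2*a^2)) δ := by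
    have := ((hasDerivAt_Kf u a b lam δ).const_mul (2*lam*a)).sub
      ((hasDerivAt_D a lam δ).mul (hasDerivAt_Kd u a b lam δ))
    refine this.congr_deriv ?_
    ring
  have hM : HasDerivAt (fun x => 2 * Kf u a b lam x * Real.sqrt (Kf u a b lam x))
      (2 * Kd u a b lam δ * Real.sqrt (Kf u a b lam δ)
        + 2 * Kf u a b lam δ * (Kd u a b lam δ / (2 * Real.sqrt (Kf u a b lam δ)))) δ := by
    exact ((hasDerivAt_Kf u a b lam δ).const_mul 2).mul (hasDerivAt_sqrtK (a:=a) (b:=b) hu hl hl1 δ)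
  have hM0 : 2 * Kf u a b lam δ * Real.sqrt (Kf u a b lam δ) ≠ 0 := by positivity
  have h := hN.div hM hM0
  refine h.congr_deriv ?_
  unfold Nf
  set g := Real.sqrt (Kf u a b lam δ) with hgdef
  rw [← hg2]
  field_simp
  ring

def Gfun (u a b lam : ℝ) : ℝ :=
  (2*(lam*a*(2*((u*b^2+a^2) - a*(1-lam+lam*a)))
      - (1-lam+lam*a)*(2*(u*b^2+a^2) - 2*lam*a^2)) * Kf u a b lam 0
    - 3*lam*(2*a*Kf u a b lam 0 - (1-lam+lam*a)*(2*((u*b^2+a^2) - a*(1-lam+lam*a))))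
        *(2*((u*b^2+a^2) - a*(1-lam+lam*a))))
  / (4*(Kf u a b lam 0)^2 * Real.sqrt (Kf u a b lam 0))

lemma Kf_zero (u a b : ℝ) : Kf u a b 0 0 = u := by unfold Kf; ring

lemma Gfun_eq {u a b lam : ℝ} (hu : 0 < u) (hl : 0 < lam) (hl1 : lam < 1) :
    lam⁻¹ * ((2 * (lam*a*Kd u a b lam 0
        - (1 - lam + lam * a * (1+(0:ℝ))) * (2*lam*(u*b^2+a^2) - 2*lam^2*a^2))
          * Kf u a b lam 0 - 3 * Nf u a b lam 0 * Kd u a b lam 0)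
        / (4 * (Kf u a b lam 0)^2 * Real.sqrt (Kf u a b lam 0)))
      = Gfun u a b lam := by
  have hK := Kf_pos (a:=a) (b:=b) hu hl hl1 0
  have hg : 0 < Real.sqrt (Kf u a b lam 0) := Real.sqrt_pos.mpr hK
  unfold Gfun Nf Kd
  field_simp
  ring

lemma Gfun_zero {u a b : ℝ} (hu : 0 < u) :
    Gfun u a b 0 = -(a^2 + b^2*u) / (u * Real.sqrt u) := by
  have hsu : 0 < Real.sqrt u := Real.sqrt_pos.mpr hu
  have hsu2 : Real.sqrt u ^ 2 = u := Real.sq_sqrt hu.le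
  unfold Gfun
  rw [Kf_zero]
  rw [← hsu2]
  field_simp
  ring

lemma Gfun_continuousAt {u a b : ℝ} (hu : 0 < u) :
    ContinuousAt (fun lam => Gfun u a b lam) 0 := by
  have hden : (4*(Kf u a b 0 0)^2 * Real.sqrt (Kf u a b 0 0)) ≠ 0 := by
    rw [Kf_zero]
    have hsu : 0 < Real.sqrt u := Real.sqrt_pos.mpr hu
    positivity
  apply ContinuousAt.div
  · unfold Kf; fun_prop
  · unfold Kf; fun_prop
  · exact hden

end SharpeAux

/-- Local concavity of the Sharpe ratio in the allocation change δ at δ = 0: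
λ⁻¹ · (∂²/∂δ²) s_λ(δ)|_{δ=0} → −(a² + b²u)/u^{3/2} as λ → 0⁺; in particular there is
λ₀ ∈ (0,1) such that for all λ ∈ (0,λ₀) the second derivative at δ = 0 is negative. -/
theorem sharpe_locally_concave_in_delta
    (u a b : ℝ) (hu : 0 < u) (ha : 0 < a) (hb : 0 < b)
    (S : ℝ → ℝ → ℝ)
    (hS : ∀ lam ∈ Set.Ioo (0:ℝ) 1, ∀ δ, -1 < δ →
      S lam δ = (1 - lam + lam * a * (1 + δ)) /
        Real.sqrt (u * (1 - lam + lam * b^2 * (1+δ)^2)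
          + (1 - lam + lam * a^2 * (1+δ)^2) - (1 - lam + lam * a * (1+δ))^2)) :
    Filter.Tendsto (fun lam => lam⁻¹ * iteratedDeriv 2 (S lam) 0)
      (nhdsWithin 0 (Set.Ioi (0:ℝ)))
      (nhds (-(a^2 + b^2*u) / (u * Real.sqrt u))) ∧
    ∃ lam₀ ∈ Set.Ioo (0:ℝ) 1, ∀ lam ∈ Set.Ioo (0:ℝ) lam₀,
      iteratedDeriv 2 (S lam) 0 < 0 := by
  have hG : ∀ lam ∈ Set.Ioo (0:ℝ) 1,
      lam⁻¹ * iteratedDeriv 2 (S lam) 0 = Gfun u a b lam := by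
    intro lam hlam
    obtain ⟨hl, hl1⟩ := hlam
    have hEq : S lam =ᶠ[nhds (0:ℝ)]
        fun δ => (1 - lam + lam * a * (1+δ)) / Real.sqrt (Kf u a b lam δ) := by
      filter_upwards [Ioi_mem_nhds (show (-1:ℝ) < 0 by norm_num)] with δ hδ
      exact hS lam ⟨hl, hl1⟩ δ hδ
    have h1 : iteratedDeriv 2 (S lam) 0 = deriv (deriv (S lam)) 0 := by
      simp [iteratedDeriv_succ, iteratedDeriv_one]
    have h2 : deriv (deriv (S lam)) 0
        = deriv (deriv (fun δ => (1 - lam + lam * a * (1+δ)) / Real.sqrt (Kf u a b lam δ))) 0 :=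
      hEq.deriv.deriv_eq
    have h3 : deriv (fun δ => (1 - lam + lam * a * (1+δ)) / Real.sqrt (Kf u a b lam δ))
        = fun δ => Nf u a b lam δ / (2 * Kf u a b lam δ * Real.sqrt (Kf u a b lam δ)) :=
      funext fun δ => (hasDerivAt_sharpe hu hl hl1 δ).deriv
    have h4 := (hasDerivAt_sharpe' (a:=a) (b:=b) hu hl hl1 0).deriv
    rw [h1, h2, h3, h4]
    exact Gfun_eq hu hl hl1
  have hmem : Set.Ioo (0:ℝ) 1 ∈ nhdsWithin (0:ℝ) (Set.Ioi 0) :=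
    Ioo_mem_nhdsGT_of_mem ⟨le_refl 0, by norm_num⟩
  have ht : Filter.Tendsto (fun lam => lam⁻¹ * iteratedDeriv 2 (S lam) 0)
      (nhdsWithin 0 (Set.Ioi (0:ℝ)))
      (nhds (-(a^2 + b^2*u) / (u * Real.sqrt u))) := by
    have hc : Filter.Tendsto (fun lam => Gfun u a b lam)
        (nhdsWithin 0 (Set.Ioi (0:ℝ))) (nhds (-(a^2 + b^2*u) / (u * Real.sqrt u))) := by
      have := (Gfun_continuousAt (a:=a) (b:=b) hu).tendsto.mono_left
        (nhdsWithin_le_nhds (s := Set.Ioi (0:ℝ)))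
      rwa [Gfun_zero hu] at this
    apply hc.congr'
    filter_upwards [hmem] with lam hlam using (hG lam hlam).symm
  refine ⟨ht, ?_⟩
  have hsu : 0 < Real.sqrt u := Real.sqrt_pos.mpr hu
  have hL : -(a^2 + b^2*u) / (u * Real.sqrt u) < 0 := by
    apply div_neg_of_neg_of_pos
    · nlinarith
    · positivity
  have hev : ∀ᶠ lam in nhdsWithin (0:ℝ) (Set.Ioi 0),
      lam⁻¹ * iteratedDeriv 2 (S lam) 0 < 0 := by
    exact ht.eventually_lt_const hL
  obtain ⟨u', hu', hsub⟩ := mem_nhdsGT_iff_exists_Ioo_subset.mp hev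
  refine ⟨min u' (1/2), ⟨lt_min hu' (by norm_num), ?_⟩, ?_⟩
  · calc min u' (1/2) ≤ 1/2 := min_le_right _ _
      _ < 1 := by norm_num
  · intro lam hlam
    have hlam' : lam ∈ Set.Ioo 0 u' := ⟨hlam.1, lt_of_lt_of_le hlam.2 (min_le_left _ _)⟩
    have h := hsub hlam'
    have hinv : 0 < lam⁻¹ := inv_pos.mpr hlam.1
    by_contra hcon
    push_neg at hcon
    exact absurd h (not_lt.mpr (mul_nonneg hinv.le hcon))
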